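/- arXiv:2106.04132 — 5 statements merged into one kernel-verified Lean document; each statement's English description precedes it below -/
import Mathlib

section
/- Let (T, μ, η, e) be an augmented monad on C, let M ⊆ Monad(C)/T and N ⊆ Fun(C^T, C)/U be subcategories. If every monad homomorphism h in M has an h-invariant inclusion Inv(h) in N and every natural transformation α in N has a stabilizer Stab(α) in M, then Inv : M^op → N and Stab : N → M^op are functors forming a Galois connection. -/
open CategoryTheory

universe v u

variable {C : Type u} [Category.{v} C]

/-- `S_h` fixes `V_α`: `(U ε) ∘ (h ⋆ α) = (e U) ∘ (h ⋆ α)`, componentwise. -/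
def Fixes {T S : Monad C} (e : (T : C ⥤ C) ⟶ 𝟭 C) (h : S ⟶ T)
    {V : T.Algebra ⥤ C} (α : V ⟶ T.forget) : Prop :=
  ∀ M : T.Algebra,
    (S : C ⥤ C).map (α.app M) ≫ h.app M.A ≫ M.a =
      (S : C ⥤ C).map (α.app M) ≫ h.app M.A ≫ e.app M.A

/-- The fix relation on the slice categories `Monad(C)/T` and `Fun(C^T, C)/U`. -/
def FixesO {T : Monad C} (e : (T : C ⥤ C) ⟶ 𝟭 C)
    (m : Over T) (n : Over (T.forget : T.Algebra ⥤ C)) : Prop :=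
  Fixes e m.hom n.hom

/-- `m` is the stabilizer of `n` (within the subcategory cut out by `P`). -/
def IsStabilizer {T : Monad C} (P : Over T → Prop) (e : (T : C ⥤ C) ⟶ 𝟭 C)
    (m : Over T) (n : Over (T.forget : T.Algebra ⥤ C)) : Prop :=
  FixesO e m n ∧ ∀ m' : Over T, P m' → FixesO e m' n → Nonempty (Unique (m' ⟶ m))

/-- `n` is the invariant inclusion for `m` (within the subcategory cut out by `Q`). -/
def IsInvariantIncl {T : Monad C} (Q : Over (T.forget : T.Algebra ⥤ C) → Prop)
    (e : (T : C ⥤ C) ⟶ 𝟭 C)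
    (n : Over (T.forget : T.Algebra ⥤ C)) (m : Over T) : Prop :=
  FixesO e m n ∧
    ∀ n' : Over (T.forget : T.Algebra ⥤ C), Q n' → FixesO e m n' →
      Nonempty (Unique (n' ⟶ n))

/-- if every `h` in `M` has an `h`-invariant inclusion in `N` and every
`α` in `N` has a stabilizer in `M`, then `Inv : Mᵒᵖ ⥤ N` and `Stab : N ⥤ Mᵒᵖ` are
functors forming a Galois connection (a contravariant adjunction with hom-sets
having at most one element). -/
theorem inv_stab_galois_connection {T : Monad C}
    (e : (T : C ⥤ C) ⟶ 𝟭 C)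
    (he₁ : ∀ X : C, T.η.app X ≫ e.app X = 𝟙 X)
    (he₂ : ∀ X : C, T.μ.app X ≫ e.app X = e.app ((T : C ⥤ C).obj X) ≫ e.app X)
    (P : Over T → Prop) (Q : Over (T.forget : T.Algebra ⥤ C) → Prop)
    (hInv : ∀ m : ObjectProperty.FullSubcategory P, ∃ n : ObjectProperty.FullSubcategory Q,
      IsInvariantIncl Q e n.obj m.obj)
    (hStab : ∀ n : ObjectProperty.FullSubcategory Q, ∃ m : ObjectProperty.FullSubcategory P,
      IsStabilizer P e m.obj n.obj) :
    ∃ (Inv : (ObjectProperty.FullSubcategory P)ᵒᵖ ⥤ ObjectProperty.FullSubcategory Q)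
      (Stab : ObjectProperty.FullSubcategory Q ⥤ (ObjectProperty.FullSubcategory P)ᵒᵖ),
      (∀ m : (ObjectProperty.FullSubcategory P)ᵒᵖ, IsInvariantIncl Q e (Inv.obj m).obj m.unop.obj) ∧
      (∀ n : ObjectProperty.FullSubcategory Q, IsStabilizer P e ((Stab.obj n).unop).obj n.obj) ∧
      Nonempty (Stab ⊣ Inv) ∧
      (∀ (n : ObjectProperty.FullSubcategory Q) (m : (ObjectProperty.FullSubcategory P)ᵒᵖ),
        Subsingleton (n ⟶ Inv.obj m)) := by
  classical
  choose Inv₀ hInv₀ using hInv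
  choose Stab₀ hStab₀ using hStab
  have fixes_left : ∀ {m m' : Over T} (f : m' ⟶ m) {n : Over (T.forget : T.Algebra ⥤ C)},
      FixesO e m n → FixesO e m' n := by
    intro m m' f n h M
    have happ : m'.hom.app M.A = (f.left : m'.left ⟶ m.left).app M.A ≫ m.hom.app M.A := by
      rw [← Over.w f]; rfl
    have hnat := (f.left : m'.left ⟶ m.left).toNatTrans.naturality (n.hom.app M)
    have hM := h M
    dsimp at hnat hM happ
    exact calc m'.left.map (n.hom.app M) ≫ m'.hom.app M.A ≫ M.a
        = m'.left.map (n.hom.app M) ≫ (f.left.app M.A ≫ m.hom.app M.A) ≫ M.a :=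
          congrArg (fun k => m'.left.map (n.hom.app M) ≫ k ≫ M.a) happ
      _ = (m'.left.map (n.hom.app M) ≫ f.left.app M.A) ≫ m.hom.app M.A ≫ M.a :=
          (congrArg (fun k => m'.left.map (n.hom.app M) ≫ k) (Category.assoc _ _ _)).trans
            (Category.assoc _ _ _).symm
      _ = (f.left.app _ ≫ m.left.map (n.hom.app M)) ≫ m.hom.app M.A ≫ M.a :=
          congrArg (· ≫ m.hom.app M.A ≫ M.a) hnat
      _ = f.left.app _ ≫ m.left.map (n.hom.app M) ≫ m.hom.app M.A ≫ e.app M.A :=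
          (Category.assoc _ _ _).trans (congrArg (f.left.app _ ≫ ·) hM)
      _ = (m'.left.map (n.hom.app M) ≫ f.left.app M.A) ≫ m.hom.app M.A ≫ e.app M.A :=
          (Category.assoc _ _ _).symm.trans (congrArg (· ≫ m.hom.app M.A ≫ e.app M.A) hnat.symm)
      _ = m'.left.map (n.hom.app M) ≫ m'.hom.app M.A ≫ e.app M.A :=
          (Category.assoc _ _ _).trans
            ((congrArg (fun k => m'.left.map (n.hom.app M) ≫ k) (Category.assoc _ _ _)).symm.trans
              (congrArg (fun k => m'.left.map (n.hom.app M) ≫ k ≫ e.app M.A) happ).symm)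
  have fixes_right : ∀ {m : Over T} {n n' : Over (T.forget : T.Algebra ⥤ C)} (g : n' ⟶ n),
      FixesO e m n → FixesO e m n' := by
    intro m n n' g h M
    have happ : n'.hom.app M = g.left.app M ≫ n.hom.app M := by rw [← Over.w g]; rfl
    have hM := h M
    dsimp at hM ⊢
    rw [happ, Functor.map_comp, Category.assoc, Category.assoc, hM]
  have subInv : ∀ (n : ObjectProperty.FullSubcategory Q) (m : ObjectProperty.FullSubcategory P),
      Subsingleton (n ⟶ Inv₀ m) := by
    intro n m
    constructor
    intro a b
    have fix : FixesO e m.obj n.obj :=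
      fixes_right (a.hom : n.obj ⟶ (Inv₀ m).obj) (hInv₀ m).1
    obtain ⟨u⟩ := (hInv₀ m).2 n.obj n.property fix
    exact ObjectProperty.hom_ext (h := (u.uniq a.hom).trans (u.uniq b.hom).symm)
  have subStab : ∀ (m : ObjectProperty.FullSubcategory P) (n : ObjectProperty.FullSubcategory Q),
      Subsingleton (m ⟶ Stab₀ n) := by
    intro m n
    constructor
    intro a b
    have fix : FixesO e m.obj n.obj :=
      fixes_left (a.hom : m.obj ⟶ (Stab₀ n).obj) (hStab₀ n).1
    obtain ⟨u⟩ := (hStab₀ n).2 m.obj m.property fix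
    exact ObjectProperty.hom_ext (h := (u.uniq a.hom).trans (u.uniq b.hom).symm)
  refine ⟨{ obj := fun m => Inv₀ m.unop
            map := fun {m m'} f =>
              ObjectProperty.homMk (((hInv₀ m'.unop).2 (Inv₀ m.unop).obj (Inv₀ m.unop).property
                (fixes_left f.unop.hom (hInv₀ m.unop).1)).some.default :
                  (Inv₀ m.unop).obj ⟶ (Inv₀ m'.unop).obj)
            map_id := fun m => (subInv _ _).elim _ _
            map_comp := fun f g => (subInv _ _).elim _ _ },
          { obj := fun n => Opposite.op (Stab₀ n)
            map := fun {n n'} g =>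
              (ObjectProperty.homMk (((hStab₀ n).2 (Stab₀ n').obj (Stab₀ n').property
                (fixes_right g.hom (hStab₀ n').1)).some.default :
                  (Stab₀ n').obj ⟶ (Stab₀ n).obj) :
                  Stab₀ n' ⟶ Stab₀ n).op
            map_id := fun n => Quiver.Hom.unop_inj ((subStab _ _).elim _ _)
            map_comp := fun f g => Quiver.Hom.unop_inj ((subStab _ _).elim _ _) },
          fun m => hInv₀ m.unop, fun n => hStab₀ n, ?_, fun n m => subInv n m.unop⟩
  refine ⟨Adjunction.mkOfHomEquiv
    { homEquiv := fun n m =>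
        { toFun := fun f =>
            ObjectProperty.homMk (((hInv₀ m.unop).2 n.obj n.property
              (fixes_left f.unop.hom (hStab₀ n).1)).some.default :
                n.obj ⟶ (Inv₀ m.unop).obj)
          invFun := fun g =>
            (ObjectProperty.homMk (((hStab₀ n).2 m.unop.obj m.unop.property
              (fixes_right (g.hom : n.obj ⟶ (Inv₀ m.unop).obj) (hInv₀ m.unop).1)).some.default :
                m.unop.obj ⟶ (Stab₀ n).obj) : m.unop ⟶ Stab₀ n).op
          left_inv := fun f => Quiver.Hom.unop_inj ((subStab m.unop n).elim _ _)
          right_inv := fun g => (subInv n m.unop).elim _ _ }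
      homEquiv_naturality_left_symm := fun f g =>
        Quiver.Hom.unop_inj ((subStab _ _).elim _ _)
      homEquiv_naturality_right := fun f g => (subInv _ _).elim _ _ }⟩
end

section
/- Let (T, μ, η, e) be an augmented monad on C, h : S → T a monad homomorphism, and suppose S has a right adjoint (θ, S ⊣ R, υ). Then for any α : V → U, h fixes α if and only if for every T-action M = (X, r_M), one has R((e∘h)_X) ∘ θ_X ∘ α_M = R(r_M ∘ h_X) ∘ θ_X ∘ α_M. Consequently, if the pair of morphisms R((e∘h)_X) θ_X and R(r_M h_X) θ_X admits an equalizer for every M, these equalizers assemble into a functor which is the h-invariant inclusion. -/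
open CategoryTheory

universe v u

variable {C : Type u} [Category.{v} C]

/-- `α : V ⟶ U` is the `h`-invariant inclusion: it is fixed by `h` and terminal
among natural transformations into the forgetful functor fixed by `h`. -/
def IsInvariantInclusion {T S : Monad C} (e : (T : C ⥤ C) ⟶ 𝟭 C) (h : S ⟶ T)
    {V : T.Algebra ⥤ C} (α : V ⟶ T.forget) : Prop :=
  Fixes e h α ∧
    ∀ (V' : T.Algebra ⥤ C) (α' : V' ⟶ T.forget), Fixes e h α' →
      ∃! β : V' ⟶ V, β ≫ α = α'

/-- if the monad `S` has a right adjoint `R` (with unit `θ`), then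
`h : S ⟶ T` fixes `α` iff `R((e∘h)_X) ∘ θ_X ∘ α_M = R(r_M ∘ h_X) ∘ θ_X ∘ α_M` for
every `T`-action `M = (X, r_M)`; and if the relevant pairs admit equalizers for
every `M`, these equalizers assemble into the `h`-invariant inclusion. -/
theorem fixes_iff_equalizes_and_invariants_as_equalizers {T S : Monad C}
    (e : (T : C ⥤ C) ⟶ 𝟭 C)
    (he₁ : ∀ X : C, T.η.app X ≫ e.app X = 𝟙 X)
    (he₂ : ∀ X : C, T.μ.app X ≫ e.app X = e.app ((T : C ⥤ C).obj X) ≫ e.app X)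
    (h : S ⟶ T) (R : C ⥤ C) (adj : (S : C ⥤ C) ⊣ R) :
    (∀ (V : T.Algebra ⥤ C) (α : V ⟶ T.forget),
      Fixes e h α ↔
        ∀ M : T.Algebra,
          α.app M ≫ adj.unit.app M.A ≫ R.map (h.app M.A ≫ e.app M.A) =
            α.app M ≫ adj.unit.app M.A ≫ R.map (h.app M.A ≫ M.a)) ∧
    ((∀ M : T.Algebra,
        Limits.HasEqualizer (adj.unit.app M.A ≫ R.map (h.app M.A ≫ e.app M.A))
          (adj.unit.app M.A ≫ R.map (h.app M.A ≫ M.a))) →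
      ∃ (V : T.Algebra ⥤ C) (α : V ⟶ T.forget)
        (w : ∀ M : T.Algebra,
          α.app M ≫ (adj.unit.app M.A ≫ R.map (h.app M.A ≫ e.app M.A)) =
            α.app M ≫ (adj.unit.app M.A ≫ R.map (h.app M.A ≫ M.a))),
        (∀ M : T.Algebra, Nonempty (Limits.IsLimit (Limits.Fork.ofι (α.app M) (w M)))) ∧
        IsInvariantInclusion e h α) := by
  classical
  have key : ∀ (M : T.Algebra) {W : C} (a : W ⟶ M.A) (g : (S : C ⥤ C).obj M.A ⟶ M.A),
      a ≫ adj.unit.app M.A ≫ R.map g = adj.homEquiv W M.A ((S : C ⥤ C).map a ≫ g) := by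
    intro M W a g
    rw [Adjunction.homEquiv_naturality_left, Adjunction.homEquiv_unit]
  have part1 : ∀ (V : T.Algebra ⥤ C) (α : V ⟶ T.forget),
      Fixes e h α ↔
        ∀ M : T.Algebra,
          α.app M ≫ adj.unit.app M.A ≫ R.map (h.app M.A ≫ e.app M.A) =
            α.app M ≫ adj.unit.app M.A ≫ R.map (h.app M.A ≫ M.a) := by
    intro V α
    constructor
    · intro hf M
      exact (key M (α.app M) (h.app M.A ≫ e.app M.A)).trans
        ((congrArg _ (hf M).symm).trans (key M (α.app M) (h.app M.A ≫ M.a)).symm)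
    · intro hf M
      exact ((adj.homEquiv _ _).injective
        (((key M (α.app M) (h.app M.A ≫ e.app M.A)).symm.trans (hf M)).trans
          (key M (α.app M) (h.app M.A ≫ M.a)))).symm
  refine ⟨part1, ?_⟩
  intro hEq
  have comm : ∀ {M N : T.Algebra} (φ : M ⟶ N)
      (gM : (S : C ⥤ C).obj M.A ⟶ M.A) (gN : (S : C ⥤ C).obj N.A ⟶ N.A)
      (hg : (S : C ⥤ C).map φ.f ≫ gN = gM ≫ φ.f),
      φ.f ≫ adj.unit.app N.A ≫ R.map gN
        = (adj.unit.app M.A ≫ R.map gM) ≫ R.map φ.f := by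
    intro M N φ gM gN hg
    have h1 : φ.f ≫ adj.unit.app N.A
        = adj.unit.app M.A ≫ R.map ((S : C ⥤ C).map φ.f) := by
      simpa using adj.unit.naturality φ.f
    rw [← Category.assoc, h1, Category.assoc, Category.assoc,
      ← R.map_comp, ← R.map_comp, hg]
  have hge : ∀ {M N : T.Algebra} (φ : M ⟶ N),
      (S : C ⥤ C).map φ.f ≫ h.app N.A ≫ e.app N.A = (h.app M.A ≫ e.app M.A) ≫ φ.f := by
    intro M N φ
    rw [← Category.assoc, h.toNatTrans.naturality φ.f, Category.assoc,
      e.naturality φ.f, Category.assoc]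
    rfl
  have hga : ∀ {M N : T.Algebra} (φ : M ⟶ N),
      (S : C ⥤ C).map φ.f ≫ h.app N.A ≫ N.a = (h.app M.A ≫ M.a) ≫ φ.f := by
    intro M N φ
    rw [← Category.assoc, h.toNatTrans.naturality φ.f, Category.assoc, φ.h,
      Category.assoc]
  have cond : ∀ {M N : T.Algebra} (φ : M ⟶ N),
      (Limits.equalizer.ι (adj.unit.app M.A ≫ R.map (h.app M.A ≫ e.app M.A))
          (adj.unit.app M.A ≫ R.map (h.app M.A ≫ M.a)) ≫ φ.f) ≫
        (adj.unit.app N.A ≫ R.map (h.app N.A ≫ e.app N.A)) =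
      (Limits.equalizer.ι (adj.unit.app M.A ≫ R.map (h.app M.A ≫ e.app M.A))
          (adj.unit.app M.A ≫ R.map (h.app M.A ≫ M.a)) ≫ φ.f) ≫
        (adj.unit.app N.A ≫ R.map (h.app N.A ≫ N.a)) := by
    intro M N φ
    rw [Category.assoc, Category.assoc, comm φ _ _ (hge φ), comm φ _ _ (hga φ)]
    have c := Limits.equalizer.condition
      (adj.unit.app M.A ≫ R.map (h.app M.A ≫ e.app M.A))
      (adj.unit.app M.A ≫ R.map (h.app M.A ≫ M.a))
    simp only [← Category.assoc] at c ⊢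
    rw [c]
  let V : T.Algebra ⥤ C :=
    { obj := fun M => Limits.equalizer
        (adj.unit.app M.A ≫ R.map (h.app M.A ≫ e.app M.A))
        (adj.unit.app M.A ≫ R.map (h.app M.A ≫ M.a))
      map := fun {M N} φ => Limits.equalizer.lift (Limits.equalizer.ι _ _ ≫ φ.f) (cond φ)
      map_id := by
        intro M
        apply Limits.equalizer.hom_ext
        simp
      map_comp := by
        intro M N P φ ψ
        apply Limits.equalizer.hom_ext
        simp }
  let α : V ⟶ T.forget :=
    { app := fun M => Limits.equalizer.ι _ _
      naturality := by
        intro M N φ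
        simp [V, Monad.forget] }
  have w : ∀ M : T.Algebra,
      α.app M ≫ (adj.unit.app M.A ≫ R.map (h.app M.A ≫ e.app M.A)) =
        α.app M ≫ (adj.unit.app M.A ≫ R.map (h.app M.A ≫ M.a)) :=
    fun M => @Limits.equalizer.condition _ _ _ _ _ _ (hEq M)
  refine ⟨V, α, w, fun M => ⟨@Limits.equalizerIsEqualizer _ _ _ _ _ _ (hEq M)⟩, ?_, ?_⟩
  · exact (part1 V α).2 (fun M => by simpa using w M)
  · intro V' α' hf'
    have hw' : ∀ M : T.Algebra,
        α'.app M ≫ (adj.unit.app M.A ≫ R.map (h.app M.A ≫ e.app M.A)) =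
          α'.app M ≫ (adj.unit.app M.A ≫ R.map (h.app M.A ≫ M.a)) := by
      intro M
      simpa using (part1 V' α').1 hf' M

    refine ⟨{ app := fun M => Limits.equalizer.lift (α'.app M) (hw' M)
              naturality := ?_ }, ?_, ?_⟩
    · intro M N φ
      apply Limits.equalizer.hom_ext
      simp [V]
      exact α'.naturality φ
    · ext M
      simp [α]
      exact @Limits.equalizer.lift_ι _ _ _ _ _ _ (hEq M) _ (α'.app M) (hw' M)
    · intro β hβ
      ext M
      have := congrArg (fun γ => NatTrans.app γ M) hβ
      simp [α] at this ⊢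
      exact this
end

section
/- Let h : S → T be a monad homomorphism between augmented monads on C, with associated functor H : C^T → C^S, and suppose H has a right adjoint (ζ, H ⊣ K, ω). Then for any α : V → U^T, h fixes α if and only if id_S fixes α̂ : V∘K → U^S, where α̂ = (U^S ω) ∘ (α K). -/
open CategoryTheory

universe v u

variable {C : Type u} [Category.{v} C]

/-- if the functor `H : C^T ⥤ C^S` associated to a monad
homomorphism `h : S ⟶ T` has a right adjoint `K` (with counit `ω`), then for any
`α : V ⟶ U^T`, `h` fixes `α` iff `id_S` fixes `α̂ = (U^S ω) ∘ (α K) : V∘K ⟶ U^S`,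
with respect to the induced augmentation `e ∘ h` of `S`. -/
theorem fixes_iff_fixes_along_right_adjoint {T S : Monad C}
    (e : (T : C ⥤ C) ⟶ 𝟭 C)
    (he₁ : ∀ X : C, T.η.app X ≫ e.app X = 𝟙 X)
    (he₂ : ∀ X : C, T.μ.app X ≫ e.app X = e.app ((T : C ⥤ C).obj X) ≫ e.app X)
    (h : S ⟶ T)
    (K : S.Algebra ⥤ T.Algebra)
    (adjH : Monad.algebraFunctorOfMonadHom h ⊣ K)
    (V : T.Algebra ⥤ C) (α : V ⟶ T.forget)
    (αhat : K ⋙ V ⟶ S.forget)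
    (hαhat : ∀ N : S.Algebra,
      αhat.app N = α.app (K.obj N) ≫ (adjH.counit.app N).f) :
    Fixes e h α ↔ Fixes (h.toNatTrans ≫ e) (𝟙 S) αhat := by
  constructor
  · intro hf N
    have hω : (S : C ⥤ C).map (adjH.counit.app N).f ≫ N.a =
        (h.app (K.obj N).A ≫ (K.obj N).a) ≫ (adjH.counit.app N).f :=
      (adjH.counit.app N).h
    have hnat : (S : C ⥤ C).map (adjH.counit.app N).f ≫ h.app N.A =
        h.app (K.obj N).A ≫ (T : C ⥤ C).map (adjH.counit.app N).f :=
      h.toNatTrans.naturality _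
    have henat : (T : C ⥤ C).map (adjH.counit.app N).f ≫ e.app N.A =
        e.app (K.obj N).A ≫ (adjH.counit.app N).f := e.naturality _
    obtain ⟨a, ha⟩ : ∃ a : V.obj (K.obj N) ⟶ (K.obj N).A, a = α.app (K.obj N) := ⟨_, rfl⟩
    obtain ⟨g, hg⟩ : ∃ g : (K.obj N).A ⟶ N.A, g = (adjH.counit.app N).f := ⟨_, rfl⟩
    have h1 : αhat.app N = a ≫ g := by subst ha hg; exact hαhat N
    have hω' : (S : C ⥤ C).map g ≫ N.a = (h.app (K.obj N).A ≫ (K.obj N).a) ≫ g := by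
      subst hg; exact hω
    have hnat' : (S : C ⥤ C).map g ≫ h.app N.A = h.app (K.obj N).A ≫ (T : C ⥤ C).map g := by
      subst hg; exact hnat
    have henat' : (T : C ⥤ C).map g ≫ e.app N.A = e.app (K.obj N).A ≫ g := by
      subst hg; exact henat
    have hN : (S : C ⥤ C).map a ≫ h.app (K.obj N).A ≫ (K.obj N).a =
        (S : C ⥤ C).map a ≫ h.app (K.obj N).A ≫ e.app (K.obj N).A := by
      subst ha; exact hf (K.obj N)
    have goal : (S : C ⥤ C).map (a ≫ g) ≫ N.a =
        (S : C ⥤ C).map (a ≫ g) ≫ h.app N.A ≫ e.app N.A := by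
      simp only [Functor.map_comp, Category.assoc, hω', reassoc_of% hN, reassoc_of% hnat', henat']
    have goal2 : (S : C ⥤ C).map (a ≫ g) ≫ 𝟙 _ ≫ N.a =
        (S : C ⥤ C).map (a ≫ g) ≫ 𝟙 _ ≫ h.app N.A ≫ e.app N.A := by
      rw [Category.id_comp, Category.id_comp]; exact goal
    rw [h1]
    exact goal2
  · intro hf M
    have htri : (adjH.unit.app M).f ≫ (adjH.counit.app ((Monad.algebraFunctorOfMonadHom h).obj M)).f = 𝟙 M.A := by
      have := adjH.left_triangle_components M
      exact congrArg Monad.Algebra.Hom.f this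
    have hαn : α.app M ≫ (adjH.unit.app M).f =
        V.map (adjH.unit.app M) ≫ α.app (K.obj ((Monad.algebraFunctorOfMonadHom h).obj M)) :=
      (α.naturality (adjH.unit.app M)).symm
    set HM := (Monad.algebraFunctorOfMonadHom h).obj M with hHM
    obtain ⟨a, ha⟩ : ∃ a : V.obj (K.obj HM) ⟶ (K.obj HM).A, a = α.app (K.obj HM) := ⟨_, rfl⟩
    obtain ⟨g, hg⟩ : ∃ g : (K.obj HM).A ⟶ M.A, g = (adjH.counit.app HM).f := ⟨_, rfl⟩
    obtain ⟨u, hu⟩ : ∃ u : M.A ⟶ (K.obj HM).A, u = (adjH.unit.app M).f := ⟨_, rfl⟩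
    have h1 : αhat.app HM = a ≫ g := by subst ha hg; exact hαhat HM
    have htri' : u ≫ g = 𝟙 M.A := by subst hu hg; exact htri
    obtain ⟨b, hb⟩ : ∃ b : V.obj M ⟶ M.A, b = α.app M := ⟨_, rfl⟩
    have hαn' : b ≫ u = V.map (adjH.unit.app M) ≫ a := by subst hu ha hb; exact hαn
    have key : (S : C ⥤ C).map (a ≫ g) ≫ h.app M.A ≫ M.a =
        (S : C ⥤ C).map (a ≫ g) ≫ h.app M.A ≫ e.app M.A := by
      have k' : (S : C ⥤ C).map (a ≫ g) ≫ 𝟙 _ ≫ (h.app M.A ≫ M.a) =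
          (S : C ⥤ C).map (a ≫ g) ≫ 𝟙 _ ≫ (h.app M.A ≫ e.app M.A) := by
        rw [← h1]; exact hf HM
      rwa [Category.id_comp, Category.id_comp] at k'
    have expand : b = V.map (adjH.unit.app M) ≫ a ≫ g := by
      rw [← Category.assoc, ← hαn', Category.assoc, htri', Category.comp_id]
    have fin : (S : C ⥤ C).map b ≫ h.app M.A ≫ M.a =
        (S : C ⥤ C).map b ≫ h.app M.A ≫ e.app M.A := by
      rw [expand]
      simp only [Functor.map_comp, Category.assoc] at key ⊢
      rw [key]
    subst hb
    exact fin
end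

section
/- Let h : S → T be a monad homomorphism between augmented monads on C, with associated functor H : C^T → C^S admitting a right adjoint K. If γ^S : Γ^S → U^S is the id_S-invariant inclusion, then γ^S H : Γ^S ∘ H → U^T (using U^S H = U^T) is the h-invariant inclusion. -/
open CategoryTheory

universe v u

variable {C : Type u} [Category.{v} C]

/-- if `H : C^T ⥤ C^S` (the functor associated to `h : S ⟶ T`) has a
right adjoint `K`, and `γˢ : Γˢ ⟶ U^S` is the `id_S`-invariant inclusion (for the
induced augmentation `e∘h`), then `γˢ H : Γˢ∘H ⟶ U^T` is the `h`-invariant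
inclusion. -/
theorem invariant_inclusion_pullback {T S : Monad C}
    (e : (T : C ⥤ C) ⟶ 𝟭 C)
    (he₁ : ∀ X : C, T.η.app X ≫ e.app X = 𝟙 X)
    (he₂ : ∀ X : C, T.μ.app X ≫ e.app X = e.app ((T : C ⥤ C).obj X) ≫ e.app X)
    (h : S ⟶ T)
    (K : S.Algebra ⥤ T.Algebra)
    (adjH : Monad.algebraFunctorOfMonadHom h ⊣ K)
    (ΓS : S.Algebra ⥤ C) (γS : ΓS ⟶ S.forget)
    (hγS : IsInvariantInclusion (h.toNatTrans ≫ e) (𝟙 S) γS)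
    (γT : Monad.algebraFunctorOfMonadHom h ⋙ ΓS ⟶ T.forget)
    (hγT : ∀ M : T.Algebra,
      γT.app M = γS.app ((Monad.algebraFunctorOfMonadHom h).obj M)) :
    IsInvariantInclusion e h γT := by
  have hid : ∀ X : C, (𝟙 S : S ⟶ S).app X = 𝟙 ((S : C ⥤ C).obj X) := fun _ => rfl
  have hHmap : ∀ {M M' : T.Algebra} (f : M ⟶ M'),
      ((Monad.algebraFunctorOfMonadHom h).map f).f = f.f := fun _ => rfl
  constructor
  · -- Fixes
    intro M
    have hfix := hγS.1 ((Monad.algebraFunctorOfMonadHom h).obj M)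
    simp only [Fixes, NatTrans.comp_app, hid, Category.id_comp,
      Monad.algebraFunctorOfMonadHom_obj_a, Monad.algebraFunctorOfMonadHom_obj_A,
      Monad.forget_obj] at hfix
    rw [hγT M]
    erw [Category.id_comp, Category.id_comp] at hfix
    exact hfix
  · intro V' α' hα'
    -- transfer α' across the adjunction
    let α'' : K ⋙ V' ⟶ S.forget :=
      { app := fun N => α'.app (K.obj N) ≫ (adjH.counit.app N).f
        naturality := by
          intro N N' g
          have h1 := α'.naturality (K.map g)
          have h2 := congrArg Monad.Algebra.Hom.f (adjH.counit.naturality g)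
          simp only [Monad.forget_map, Monad.Algebra.comp_f, hHmap,
            Functor.comp_map, Functor.id_map] at h1 h2 ⊢
          erw [← Category.assoc, h1, Category.assoc, h2, Category.assoc]; rfl }
    have hαfix : Fixes (h.toNatTrans ≫ e) (𝟙 S) α'' := by
      intro N
      have h1 := hα' (K.obj N)
      have hc := congrArg (fun x => x) (adjH.counit.app N).h
      simp only [Functor.comp_obj, Functor.id_obj,
        Monad.algebraFunctorOfMonadHom_obj_a, Monad.algebraFunctorOfMonadHom_obj_A] at hc
      have hnat : (S : C ⥤ C).map (adjH.counit.app N).f ≫ h.app N.A =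
          h.app (K.obj N).A ≫ (T : C ⥤ C).map (adjH.counit.app N).f :=
        h.toNatTrans.naturality _
      have hnat' : (T : C ⥤ C).map (adjH.counit.app N).f ≫ e.app N.A =
          e.app (K.obj N).A ≫ (adjH.counit.app N).f := e.naturality _
      simp only [NatTrans.comp_app, hid, Category.id_comp, Monad.forget_obj,
        Functor.map_comp, Category.assoc, α'']
      erw [Category.id_comp, Category.id_comp, Functor.map_comp, Category.assoc, hc]
      have key : ∀ (a : V'.obj (K.obj N) ⟶ (K.obj N).A) (c : (K.obj N).A ⟶ N.A),
          S.map a ≫ h.app (K.obj N).A ≫ (K.obj N).a = S.map a ≫ h.app (K.obj N).A ≫ e.app (K.obj N).A →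
          S.map c ≫ h.app N.A = h.app (K.obj N).A ≫ T.map c →
          T.map c ≫ e.app N.A = e.app (K.obj N).A ≫ c →
          S.map a ≫ (h.app (K.obj N).A ≫ (K.obj N).a) ≫ c =
          (S.map a ≫ S.map c) ≫ h.app N.A ≫ e.app N.A := by
        intro a c h1 hnat hnat'
        simp only [Category.assoc]
        rw [reassoc_of% h1, ← hnat', ← reassoc_of% hnat]
      exact key _ _ h1 hnat hnat'
    obtain ⟨β'', hβ'', huniq⟩ := hγS.2 (K ⋙ V') α'' hαfix
    refine ⟨{ app := fun M => V'.map (adjH.unit.app M) ≫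
                β''.app ((Monad.algebraFunctorOfMonadHom h).obj M)
              naturality := ?_ }, ?_, ?_⟩
    · intro M M' f
      have h1 : f ≫ adjH.unit.app M' =
          adjH.unit.app M ≫ K.map ((Monad.algebraFunctorOfMonadHom h).map f) := by
        simpa using adjH.unit.naturality f
      have h2 := β''.naturality ((Monad.algebraFunctorOfMonadHom h).map f)
      simp only [Functor.comp_map] at h2 ⊢
      rw [← Category.assoc, ← V'.map_comp, h1, V'.map_comp, Category.assoc, h2,
        Category.assoc]
    · ext M
      have h1 : V'.map (adjH.unit.app M) ≫
          α'.app (K.obj ((Monad.algebraFunctorOfMonadHom h).obj M)) =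
          α'.app M ≫ (adjH.unit.app M).f := by
        exact α'.naturality (adjH.unit.app M)
      have htri : (adjH.unit.app M).f ≫
          (adjH.counit.app ((Monad.algebraFunctorOfMonadHom h).obj M)).f = 𝟙 M.A := by
        have := congrArg Monad.Algebra.Hom.f (adjH.left_triangle_components M)
        simp only [Monad.Algebra.comp_f, Monad.Algebra.id_f, hHmap] at this
        exact this
      have hb := congrArg
        (fun (x : K ⋙ V' ⟶ S.forget) =>
          x.app ((Monad.algebraFunctorOfMonadHom h).obj M)) hβ''
      simp only [NatTrans.comp_app] at hb ⊢
      erw [hγT M, Category.assoc, hb]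
      show V'.map (adjH.unit.app M) ≫
        α'.app (K.obj ((Monad.algebraFunctorOfMonadHom h).obj M)) ≫ _ = _
      erw [← Category.assoc, h1, Category.assoc, htri]
      erw [Category.comp_id]
    · intro β₁ hβ₁
      -- transfer β₁ across the adjunction
      let bt : K ⋙ V' ⟶ ΓS :=
        { app := fun N => β₁.app (K.obj N) ≫ ΓS.map (adjH.counit.app N)
          naturality := by
            intro N N' g
            have h1 := β₁.naturality (K.map g)
            have h2 := adjH.counit.naturality g
            simp only [Functor.comp_map, Functor.id_map] at h1 h2 ⊢
            rw [← Category.assoc, h1, Category.assoc, ← ΓS.map_comp, h2,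
              ΓS.map_comp, Category.assoc] }
      have hbt : bt ≫ γS = α'' := by
        ext N
        have h1 := γS.naturality (adjH.counit.app N)
        have h3 := congrArg
          (fun (x : V' ⟶ T.forget) => x.app (K.obj N) ≫ (adjH.counit.app N).f) hβ₁
        simp only [NatTrans.comp_app, Monad.forget_map, Functor.comp_obj,
          Functor.id_obj, Category.assoc] at h1 h3 ⊢
        show (β₁.app (K.obj N) ≫ ΓS.map (adjH.counit.app N)) ≫ γS.app N =
          α'.app (K.obj N) ≫ (adjH.counit.app N).f
        erw [Category.assoc, h1, ← hγT (K.obj N)]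
        erw [Category.assoc] at h3
        exact h3
      have hbteq := huniq bt hbt
      ext M
      have key : ∀ (β : V' ⟶ Monad.algebraFunctorOfMonadHom h ⋙ ΓS),
          β.app M = V'.map (adjH.unit.app M) ≫
            β.app (K.obj ((Monad.algebraFunctorOfMonadHom h).obj M)) ≫
            ΓS.map (adjH.counit.app ((Monad.algebraFunctorOfMonadHom h).obj M)) := by
        intro β
        have h1 : V'.map (adjH.unit.app M) ≫
            β.app (K.obj ((Monad.algebraFunctorOfMonadHom h).obj M)) =
            β.app M ≫ ΓS.map ((Monad.algebraFunctorOfMonadHom h).map (adjH.unit.app M)) := by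
          simpa using β.naturality (adjH.unit.app M)
        rw [← Category.assoc, h1, Category.assoc, ← ΓS.map_comp,
          adjH.left_triangle_components M]
        simp
      calc β₁.app M
          = V'.map (adjH.unit.app M) ≫
              β₁.app (K.obj ((Monad.algebraFunctorOfMonadHom h).obj M)) ≫
              ΓS.map (adjH.counit.app ((Monad.algebraFunctorOfMonadHom h).obj M)) :=
            key β₁
        _ = V'.map (adjH.unit.app M) ≫
              bt.app ((Monad.algebraFunctorOfMonadHom h).obj M) := rfl
        _ = V'.map (adjH.unit.app M) ≫
              β''.app ((Monad.algebraFunctorOfMonadHom h).obj M) := by rw [hbteq]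
end

section
/- Let W : D → C and G : D' → D be functors such that the internal Ends End[W] and End[W∘G] both exist. Then the canonical morphism |G : End[W] → End[W∘G], defined as the unique morphism into the end with λ'_X ∘ |G = λ_{GX} for all X in D', is a monoid homomorphism. -/
open CategoryTheory MonoidalCategory MonoidalClosed

universe v v' v'' u u' u''

variable {C : Type u} [Category.{v} C] [MonoidalCategory C]
variable {D : Type u'} [Category.{v'} D] {D' : Type u''} [Category.{v''} D']

/-- A wedge for the bifunctor `(d₁, d₂) ↦ [W d₁, W d₂]`. -/
def IsWedge (W : D ⥤ C) [∀ d : D, Closed (W.obj d)] (N : C)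
    (π : ∀ d : D, N ⟶ (ihom (W.obj d)).obj (W.obj d)) : Prop :=
  ∀ {d d' : D} (f : d ⟶ d'),
    π d ≫ (ihom (W.obj d)).map (W.map f) =
      π d' ≫ (MonoidalClosed.pre (W.map f)).app (W.obj d')

/-- `(N, π)` is the left internal End `End[W] = ∫_{d} [W d, W d]`. -/
def IsInternalEnd (W : D ⥤ C) [∀ d : D, Closed (W.obj d)] (N : C)
    (π : ∀ d : D, N ⟶ (ihom (W.obj d)).obj (W.obj d)) : Prop :=
  IsWedge W N π ∧
    ∀ (Z : C) (q : ∀ d : D, Z ⟶ (ihom (W.obj d)).obj (W.obj d)),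
      IsWedge W Z q → ∃! t : Z ⟶ N, ∀ d : D, t ≫ π d = q d

/-- for `W : D ⥤ C` and `G : D' ⥤ D` such that `End[W]` and
`End[W∘G]` exist (with their canonical monoid structures), the canonical
restriction morphism `|G : End[W] ⟶ End[W∘G]`, determined by
`λ'_X ∘ |G = λ_{G X}`, is a monoid homomorphism. -/
theorem internalEnd_restriction_monoidHom (W : D ⥤ C) (G : D' ⥤ D)
    [∀ d : D, Closed (W.obj d)]
    (N : C) (π : ∀ d : D, N ⟶ (ihom (W.obj d)).obj (W.obj d))
    (hN : IsInternalEnd W N π)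
    (N' : C) (π' : ∀ X : D', N' ⟶ (ihom (W.obj (G.obj X))).obj (W.obj (G.obj X)))
    (hN' : @IsInternalEnd C _ _ D' _ (G ⋙ W) (fun X => (inferInstance : Closed (W.obj (G.obj X)))) N' π')
    -- the canonical monoid structures:
    (one : 𝟙_ C ⟶ N) (mul : N ⊗ N ⟶ N)
    (hone : ∀ d : D, one ≫ π d = MonoidalClosed.id (W.obj d))
    (hmul : ∀ d : D, mul ≫ π d =
      (π d ⊗ₘ π d) ≫ MonoidalClosed.comp (W.obj d) (W.obj d) (W.obj d))
    (one' : 𝟙_ C ⟶ N') (mul' : N' ⊗ N' ⟶ N')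
    (hone' : ∀ X : D', one' ≫ π' X = MonoidalClosed.id (W.obj (G.obj X)))
    (hmul' : ∀ X : D', mul' ≫ π' X = (π' X ⊗ₘ π' X) ≫
      MonoidalClosed.comp (W.obj (G.obj X)) (W.obj (G.obj X)) (W.obj (G.obj X)))
    -- the restriction morphism:
    (r : N ⟶ N') (hr : ∀ X : D', r ≫ π' X = π (G.obj X)) :
    one ≫ r = one' ∧ mul ≫ r = (r ⊗ₘ r) ≫ mul' := by
  have hw : @IsWedge C _ _ D' _ (G ⋙ W)
      (fun X => (inferInstance : Closed (W.obj (G.obj X)))) N' π' := hN'.1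
  have pre_wedge : ∀ (Z : C) (g : Z ⟶ N'),
      @IsWedge C _ _ D' _ (G ⋙ W)
        (fun X => (inferInstance : Closed (W.obj (G.obj X)))) Z
        (fun X => g ≫ π' X) := by
    intro Z g X X' f
    simp only [Category.assoc, hw f]
  constructor
  · -- one part
    obtain ⟨t, -, ht⟩ := hN'.2 (𝟙_ C) (fun X => one' ≫ π' X) (pre_wedge _ one')
    have h1 : one ≫ r = t := by
      apply ht
      intro X
      rw [Category.assoc, hr, hone, hone']
    have h2 : one' = t := ht one' (fun X => rfl)
    rw [h1, h2]
  · obtain ⟨t, -, ht⟩ := hN'.2 (N ⊗ N) (fun X => (r ⊗ₘ r) ≫ mul' ≫ π' X)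
      (by
        intro X X' f
        simp only [Category.assoc, hw f])
    have h1 : (mul ≫ r) = t := by
      apply ht
      intro X
      rw [Category.assoc, hr, hmul]
      have : π (G.obj X) = r ≫ π' X := (hr X).symm
      rw [this, hmul' X]
      simp [MonoidalCategory.tensorHom_comp_tensorHom]
    have h2 : (r ⊗ₘ r) ≫ mul' = t := by
      apply ht
      intro X
      rw [Category.assoc]
    rw [h1, h2]
end
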